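/- For every fixed 0 < a < b < 1, the function s ↦ b · a^{(1+s)/(2s)} (1−a)^{−1/(2s)} [ (1−b)^{1/(2s)} b^{−(1+s)/(2s)} + ∫_a^b (1−x)^{1/(2s)} x^{−(1+s)/(2s)} (1/2 + 1/(2s(1−x))) dx ] is nondecreasing on (0,∞). -/

import Mathlib

open Real Set intervalIntegral MeasureTheory

/-- The integral `∫_a^y (1−x)^{1/(2s)} x^{−(1+s)/(2s)} (1/2 + 1/(2s(1−x))) dx`. -/
noncomputable def intI (s a y : ℝ) : ℝ :=
  ∫ x in a..y, (1 - x) ^ (1 / (2 * s)) / x ^ ((1 + s) / (2 * s)) *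
    (1 / 2 + 1 / (2 * s) * (1 / (1 - x)))

lemma contOn_pow (c d a b : ℝ) (ha : 0 < a) (hb : b < 1) :
    ContinuousOn (fun x : ℝ => (1 - x) ^ c / x ^ d) (Set.Icc a b) := by
  apply ContinuousOn.div
  · exact ContinuousOn.rpow_const (by fun_prop) fun x hx => Or.inl (by
      have := hx.2; intro h; nlinarith [hx.2])
  · exact ContinuousOn.rpow_const (by fun_prop) fun x hx => Or.inl (by nlinarith [hx.1])
  · intro x hx
    exact (Real.rpow_pos_of_pos (lt_of_lt_of_le ha hx.1) d).ne'

lemma contOn_fac (c a b : ℝ) (hb : b < 1) :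
    ContinuousOn (fun x : ℝ => c * (1 / (1 - x)) - 1 / 2) (Set.Icc a b) := by
  apply ContinuousOn.sub _ continuousOn_const
  apply ContinuousOn.mul continuousOn_const
  apply ContinuousOn.div continuousOn_const (by fun_prop)
  intro x hx
  have := hx.2
  intro h; nlinarith

lemma ftc_aux (c a b : ℝ) (ha : 0 < a) (hab : a ≤ b) (hb : b < 1) :
    ∫ x in a..b, (1 - x) ^ c / x ^ (c + 1 / 2) * (c * (1 / (1 - x)) - 1 / 2)
      = (1 - a) ^ c * a ^ (1 / 2 - c) - (1 - b) ^ c * b ^ (1 / 2 - c) := by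
  have huIcc : Set.uIcc a b = Set.Icc a b := Set.uIcc_of_le hab
  have key : ∀ x ∈ Set.uIcc a b,
      HasDerivAt (fun y : ℝ => -((1 - y) ^ c * y ^ (1 / 2 - c)))
        ((1 - x) ^ c / x ^ (c + 1 / 2) * (c * (1 / (1 - x)) - 1 / 2)) x := by
    intro x hx
    rw [huIcc] at hx
    have hx0 : 0 < x := lt_of_lt_of_le ha hx.1
    have hx1 : x < 1 := lt_of_le_of_lt hx.2 hb
    have h1x : 0 < 1 - x := by linarith
    have d1 : HasDerivAt (fun y : ℝ => (1 - y) ^ c) (-1 * c * (1 - x) ^ (c - 1)) x := by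
      have h : HasDerivAt (fun y : ℝ => 1 - y) (-1) x := by
        simpa using (hasDerivAt_id x).const_sub 1
      exact h.rpow_const (Or.inl h1x.ne')
    have d2 : HasDerivAt (fun y : ℝ => y ^ (1 / 2 - c)) ((1 / 2 - c) * x ^ (1 / 2 - c - 1)) x :=
      Real.hasDerivAt_rpow_const (Or.inl hx0.ne')
    have := (d1.mul d2).neg
    refine this.congr_deriv ?_
    have e1 : (1 - x) ^ (c - 1) = (1 - x) ^ c / (1 - x) := by
      rw [Real.rpow_sub h1x, Real.rpow_one]
    have e2 : x ^ (1 / 2 - c - 1) = x ^ (1 / 2 - c) / x := by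
      rw [show (1 / 2 - c - 1 : ℝ) = (1 / 2 - c) - 1 by ring, Real.rpow_sub hx0, Real.rpow_one]
    have e3 : x ^ (1 / 2 - c) * x ^ (c + 1 / 2) = x := by
      rw [← Real.rpow_add hx0, show (1 / 2 - c + (c + 1 / 2) : ℝ) = 1 by ring, Real.rpow_one]
    have hA : x ^ (c + 1 / 2) ≠ 0 := (Real.rpow_pos_of_pos hx0 _).ne'
    have e4 : (1 - x) ^ c / x ^ (c + 1 / 2) = (1 - x) ^ c * x ^ (1 / 2 - c) / x := by
      rw [div_eq_div_iff hA hx0.ne', mul_assoc, e3]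
    rw [e1, e2, e4]
    field_simp
    ring
  rw [intervalIntegral.integral_eq_sub_of_hasDerivAt key (by
    apply ContinuousOn.intervalIntegrable
    rw [huIcc]
    exact (contOn_pow c (c + 1/2) a b ha hb).mul (contOn_fac c a b hb))]
  ring

lemma contOn_final (c d a b : ℝ) (ha : 0 < a) (hb : b < 1) :
    ContinuousOn (fun x : ℝ => (a / x) ^ d * ((1 - x) / (1 - a)) ^ c) (Set.Icc a b) := by
  apply ContinuousOn.mul
  · apply ContinuousOn.rpow_const
    · exact ContinuousOn.div continuousOn_const (by fun_prop)
        fun x hx => (lt_of_lt_of_le ha hx.1).ne'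
    · intro x hx
      have hx0 : 0 < x := lt_of_lt_of_le ha hx.1
      exact Or.inl (div_pos ha hx0).ne'
  · apply ContinuousOn.rpow_const (by fun_prop)
    intro x hx
    have h1 : x < 1 := lt_of_le_of_lt hx.2 hb
    left
    intro h
    have h1a : (1 : ℝ) - a ≠ 0 := by intro h'; nlinarith [hx.1]
    rw [div_eq_zero_iff] at h
    rcases h with h | h
    · linarith
    · exact h1a h

lemma value_eq (a b s : ℝ) (ha : 0 < a) (hab : a < b) (hb : b < 1) (hs : 0 < s) :
    b * (a ^ ((1 + s) / (2 * s)) / (1 - a) ^ (1 / (2 * s))) *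
      ((1 - b) ^ (1 / (2 * s)) / b ^ ((1 + s) / (2 * s)) + intI s a b)
    = b * (a + (1 - b) * ((a / b) ^ ((1 + s) / (2 * s)) * ((1 - b) / (1 - a)) ^ (1 / (2 * s)))
        + ∫ x in a..b, (a / x) ^ ((1 + s) / (2 * s)) * ((1 - x) / (1 - a)) ^ (1 / (2 * s))) := by
  have hb0 : 0 < b := ha.trans hab
  have h1a : (0:ℝ) < 1 - a := by linarith
  have h1b : (0:ℝ) < 1 - b := by linarith
  set c := 1 / (2 * s) with hc
  set d := (1 + s) / (2 * s) with hdd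
  have hd : d = c + 1 / 2 := by
    rw [hc, hdd]
    field_simp
  have hint1 : IntervalIntegrable
      (fun x => (1 - x) ^ c / x ^ d * (c * (1 / (1 - x)) - 1 / 2)) MeasureTheory.volume a b := by
    apply ContinuousOn.intervalIntegrable
    rw [Set.uIcc_of_le hab.le]
    exact (contOn_pow c d a b ha hb).mul (contOn_fac c a b hb)
  have hint2 : IntervalIntegrable (fun x => (1 - x) ^ c / x ^ d) MeasureTheory.volume a b := by
    apply ContinuousOn.intervalIntegrable
    rw [Set.uIcc_of_le hab.le]
    exact contOn_pow c d a b ha hb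
  have hsplit : intI s a b
      = ((1 - a) ^ c * a ^ (1 / 2 - c) - (1 - b) ^ c * b ^ (1 / 2 - c))
        + ∫ x in a..b, (1 - x) ^ c / x ^ d := by
    have h0 : intI s a b = ∫ x in a..b,
        ((1 - x) ^ c / x ^ d * (c * (1 / (1 - x)) - 1 / 2) + (1 - x) ^ c / x ^ d) := by
      simp only [intI, hc, hdd]
      congr 1
      funext x
      ring
    rw [h0, intervalIntegral.integral_add hint1 hint2]
    congr 1
    rw [hd]
    exact ftc_aux c a b ha hab.le hb
  have hKJ : (∫ x in a..b, (a / x) ^ d * ((1 - x) / (1 - a)) ^ c)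
      = (a ^ d / (1 - a) ^ c) * ∫ x in a..b, (1 - x) ^ c / x ^ d := by
    rw [← intervalIntegral.integral_const_mul]
    apply intervalIntegral.integral_congr
    intro x hx
    rw [Set.uIcc_of_le hab.le] at hx
    have hx0 : 0 < x := lt_of_lt_of_le ha hx.1
    have h1x : (0:ℝ) ≤ 1 - x := by nlinarith [hx.2]
    simp only []
    rw [Real.div_rpow ha.le hx0.le, Real.div_rpow h1x h1a.le]
    ring
  have hab' : (a / b) ^ d * ((1 - b) / (1 - a)) ^ c
      = (a ^ d / (1 - a) ^ c) * ((1 - b) ^ c / b ^ d) := by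
    rw [Real.div_rpow ha.le hb0.le, Real.div_rpow h1b.le h1a.le]
    ring
  have hA1 : (0:ℝ) < a ^ d := Real.rpow_pos_of_pos ha d
  have hB1 : (0:ℝ) < b ^ d := Real.rpow_pos_of_pos hb0 d
  have hA3 : (0:ℝ) < (1 - a) ^ c := Real.rpow_pos_of_pos h1a c
  have ea : a ^ (1 / 2 - c) = a / a ^ d := by
    rw [eq_div_iff hA1.ne', ← Real.rpow_add ha, hd,
      show (1 / 2 - c + (c + 1 / 2) : ℝ) = 1 by ring, Real.rpow_one]
  have eb : b ^ (1 / 2 - c) = b / b ^ d := by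
    rw [eq_div_iff hB1.ne', ← Real.rpow_add hb0, hd,
      show (1 / 2 - c + (c + 1 / 2) : ℝ) = 1 by ring, Real.rpow_one]
  rw [hsplit, hKJ, hab', ea, eb]
  field_simp
  ring

/-- For fixed `0 < a < b < 1`, the limiting genetic weight
`b ⬝ a^{(1+s)/(2s)} (1−a)^{−1/(2s)} [(1−b)^{1/(2s)} b^{−(1+s)/(2s)} + ∫_a^b ⋯ dx]`
is a nondecreasing function of the selection strength `s` on `(0,∞)`. -/
theorem limiting_weight_monotone_in_selection
    (a b : ℝ) (ha : 0 < a) (hab : a < b) (hb : b < 1) :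
    MonotoneOn (fun s : ℝ =>
        b * (a ^ ((1 + s) / (2 * s)) / (1 - a) ^ (1 / (2 * s))) *
          ((1 - b) ^ (1 / (2 * s)) / b ^ ((1 + s) / (2 * s)) + intI s a b))
      (Set.Ioi 0) := by
  intro s₁ hs₁ s₂ hs₂ h12
  have hs₁' : (0:ℝ) < s₁ := hs₁
  have hs₂' : (0:ℝ) < s₂ := hs₂
  have hb0 : 0 < b := ha.trans hab
  have h1a : (0:ℝ) < 1 - a := by linarith
  have h1b : (0:ℝ) < 1 - b := by linarith
  simp only [value_eq a b s₁ ha hab hb hs₁', value_eq a b s₂ ha hab hb hs₂']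
  apply mul_le_mul_of_nonneg_left _ hb0.le
  have hec : 1 / (2 * s₂) ≤ 1 / (2 * s₁) :=
    one_div_le_one_div_of_le (by linarith) (by linarith)
  have hed : (1 + s₂) / (2 * s₂) ≤ (1 + s₁) / (2 * s₁) := by
    rw [div_le_div_iff₀ (by linarith) (by linarith)]
    nlinarith
  have hpt : ∀ x : ℝ, a ≤ x → x ≤ b →
      (a / x) ^ ((1 + s₁) / (2 * s₁)) * ((1 - x) / (1 - a)) ^ (1 / (2 * s₁))
        ≤ (a / x) ^ ((1 + s₂) / (2 * s₂)) * ((1 - x) / (1 - a)) ^ (1 / (2 * s₂)) := by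
    intro x h1 h2
    have hx0 : 0 < x := lt_of_lt_of_le ha h1
    have hx1 : x < 1 := lt_of_le_of_lt h2 hb
    have hax : 0 < a / x := div_pos ha hx0
    have hax1 : a / x ≤ 1 := (div_le_one hx0).mpr h1
    have hbx : 0 < (1 - x) / (1 - a) := div_pos (by linarith) h1a
    have hbx1 : (1 - x) / (1 - a) ≤ 1 := (div_le_one h1a).mpr (by linarith)
    exact mul_le_mul (Real.rpow_le_rpow_of_exponent_ge hax hax1 hed)
      (Real.rpow_le_rpow_of_exponent_ge hbx hbx1 hec)
      (Real.rpow_nonneg hbx.le _) (Real.rpow_nonneg hax.le _)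
  apply add_le_add
  · exact add_le_add le_rfl (mul_le_mul_of_nonneg_left (hpt b hab.le le_rfl) h1b.le)
  · apply intervalIntegral.integral_mono_on hab.le
    · exact ContinuousOn.intervalIntegrable (by
        rw [Set.uIcc_of_le hab.le]
        exact contOn_final (1 / (2 * s₁)) ((1 + s₁) / (2 * s₁)) a b ha hb)
    · exact ContinuousOn.intervalIntegrable (by
        rw [Set.uIcc_of_le hab.le]
        exact contOn_final (1 / (2 * s₂)) ((1 + s₂) / (2 * s₂)) a b ha hb)
    · exact fun x hx => hpt x hx.1 hx.2
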